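/- Let W = δ(U(π,u,yu)) ∈ T_I(G) satisfy ζ(W) = δ(U(π̂,u,ŷu)) ≠ W, where the ζ-move swaps terminal subpaths of π_{u_j}, π_{u_{j'}} at the central vertex of G_{J_p}, and let b be the number of paths of π which enter G_{J_p} between π_{u_j} and π_{u_{j'}} and also leave G_{J_p} between these two paths. Then incross(ζ(W)) = incross(W) + b if the triple (π_{u_j},π_{u_{j'}},p) is a crossing, and incross(ζ(W)) = incross(W) − b otherwise. -/

import Mathlib

/- Common combinatorial setup: star networks, covering path families,
   crossing/noncrossing statistics, and the base ring ℤ[q^{1/2},q^{-1/2}]. -/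

open Equiv Finset
open scoped Classical

noncomputable section

/-- The ring `ℤ[q^{1/2}, q^{-1/2}]`, realized as Laurent polynomials in the
variable `q^{1/2}` (so the exponent-`k` monomial is `q^{k/2}`). -/
abbrev R2 : Type := LaurentPolynomial ℤ

/-- `q^{k/2}`. -/
def Qp (k : ℤ) : R2 := LaurentPolynomial.T k

/-- `q`. -/
def qq : R2 := LaurentPolynomial.T 2

/-- Coxeter length of a permutation, i.e. its inversion number. -/
def len {n : ℕ} (w : Perm (Fin n)) : ℕ :=
  ((univ : Finset (Fin n × Fin n)).filter fun p => p.1 < p.2 ∧ w p.2 < w p.1).card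

/-- Membership in the interval `J = [a,b] ⊆ [n]`. -/
def memJ {n : ℕ} (J : Fin n × Fin n) (i : Fin n) : Prop := J.1 ≤ i ∧ i ≤ J.2

/-- Membership in the subgroup `S_J ≤ S_n` generated by the adjacent
transpositions `s_a, …, s_{b-1}` of the interval `J = [a,b]`; equivalently,
the permutations supported on `[a,b]`. -/
def inSJ {n : ℕ} (J : Fin n × Fin n) (w : Perm (Fin n)) : Prop :=
  ∀ i, w i ≠ i → memJ J i

/-- A path family covering the star network `G_{J_1} ∘ ⋯ ∘ G_{J_m}` is
faithfully encoded by the permutation of the wire positions realized at each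
simple-star factor: at factor `p` the paths whose current positions lie in
`J_p` pass through the central vertex and are permuted arbitrarily within
`J_p` (every entering and leaving edge being used exactly once), while all
other paths use their unique horizontal edge.  Thus a covering family is a
sequence `vs` of permutations with `vs p` supported on `J_p`. -/
def IsPathFamily {n m : ℕ} (Js : Fin m → Fin n × Fin n)
    (vs : Fin m → Perm (Fin n)) : Prop :=
  ∀ p, inSJ (Js p) (vs p)

/-- The position of the path starting at source `i` just before factor `k`
(as a permutation of sources). -/
def posAt {n m : ℕ} (vs : Fin m → Perm (Fin n)) (k : ℕ) : Perm (Fin n) :=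
  (((List.ofFn vs).take k).reverse).prod

/-- The type of a covering path family: the path starting at source `i`
terminates at sink `typeOf vs i`. -/
def typeOf {n m : ℕ} (vs : Fin m → Perm (Fin n)) : Perm (Fin n) := posAt vs m

/-- The path from source `i` passes through the central vertex of the factor
`G_{J_p}`. -/
def centeredAt {n m : ℕ} (Js : Fin m → Fin n × Fin n) (vs : Fin m → Perm (Fin n))
    (p : Fin m) (i : Fin n) : Prop :=
  (Js p).1 < (Js p).2 ∧ memJ (Js p) (posAt vs p i)

/-- The paths from sources `i` and `j` both pass through the central vertex of
the factor `G_{J_p}`. -/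
def meetAt {n m : ℕ} (Js : Fin m → Fin n × Fin n) (vs : Fin m → Perm (Fin n))
    (p : Fin m) (i j : Fin n) : Prop :=
  centeredAt Js vs p i ∧ centeredAt Js vs p j

/-- The triple `(π_i, π_j, p)` is a crossing: the two paths intersect at the
central vertex of `G_{J_p}` and cross there. -/
def crossingAt {n m : ℕ} (Js : Fin m → Fin n × Fin n) (vs : Fin m → Perm (Fin n))
    (p : Fin m) (i j : Fin n) : Prop :=
  meetAt Js vs p i j ∧
    ¬ ((posAt vs p i < posAt vs p j) ↔ (posAt vs (p.1 + 1) i < posAt vs (p.1 + 1) j))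

/-- `cross(π)`: the number of crossings of the path family. -/
def crossNum {n m : ℕ} (Js : Fin m → Fin n × Fin n)
    (vs : Fin m → Perm (Fin n)) : ℕ :=
  ((univ : Finset ((Fin n × Fin n) × Fin m)).filter fun x =>
    x.1.1 < x.1.2 ∧ crossingAt Js vs x.2 x.1.1 x.1.2).card

/-- The triple `(π_i, π_j, p)` is a noncrossing with `π_i` entering and
leaving the central vertex of `G_{J_p}` below `π_j`. -/
def noncrossBelow {n m : ℕ} (Js : Fin m → Fin n × Fin n) (vs : Fin m → Perm (Fin n))
    (p : Fin m) (i j : Fin n) : Prop :=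
  meetAt Js vs p i j ∧
    posAt vs p i < posAt vs p j ∧ posAt vs (p.1 + 1) i < posAt vs (p.1 + 1) j

/-- `incross(U)` for a tableau `U` containing the paths of `π`, recorded via
the function `col` assigning to each path (index) the index of the column of
`U` containing it: the number of inverted noncrossings, i.e. noncrossings
`(π_i, π_j, p)` (with `π_i` below `π_j`) such that `π_j` lies in an earlier
column of `U` than `π_i`. -/
def incrossNum {n m : ℕ} (Js : Fin m → Fin n × Fin n) (vs : Fin m → Perm (Fin n))
    (col : Fin n → ℕ) : ℕ :=
  ((univ : Finset ((Fin n × Fin n) × Fin m)).filter fun x =>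
    noncrossBelow Js vs x.2 x.1.1 x.1.2 ∧ col x.1.2 < col x.1.1).card

/-- The number of crossings of the two paths `π_i, π_j` strictly before the
factor `G_{J_p}`. -/
def crossBefore {n m : ℕ} (Js : Fin m → Fin n × Fin n) (vs : Fin m → Perm (Fin n))
    (p : Fin m) (i j : Fin n) : ℕ :=
  ((univ : Finset (Fin m)).filter fun k => k < p ∧ crossingAt Js vs k i j).card

/-- The triple `(π_i, π_j, p)` is defective: the paths meet at the central
vertex of `G_{J_p}` having previously crossed an odd number of times. -/
def defectiveAt {n m : ℕ} (Js : Fin m → Fin n × Fin n) (vs : Fin m → Perm (Fin n))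
    (p : Fin m) (i j : Fin n) : Prop :=
  meetAt Js vs p i j ∧ Odd (crossBefore Js vs p i j)

/-- `dfct(π)`: the number of defective triples of the path family. -/
def dfctNum {n m : ℕ} (Js : Fin m → Fin n × Fin n)
    (vs : Fin m → Perm (Fin n)) : ℕ :=
  ((univ : Finset ((Fin n × Fin n) × Fin m)).filter fun x =>
    x.1.1 < x.1.2 ∧ defectiveAt Js vs x.2 x.1.1 x.1.2).card

/-- `cdncross(W)`: the number of defective noncrossings between pairs of
paths appearing in the same column of the tableau recorded by `col`. -/
def cdncrossNum {n m : ℕ} (Js : Fin m → Fin n × Fin n) (vs : Fin m → Perm (Fin n))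
    (col : Fin n → ℕ) : ℕ :=
  ((univ : Finset ((Fin n × Fin n) × Fin m)).filter fun x =>
    x.1.1 < x.1.2 ∧ defectiveAt Js vs x.2 x.1.1 x.1.2 ∧
      ¬ crossingAt Js vs x.2 x.1.1 x.1.2 ∧ col x.1.1 = col x.1.2).card

/-- The adjacent transposition `s_{i+1}` (0-indexed: swaps positions `i` and
`i+1`). -/
def swp {n : ℕ} (i : ℕ) (h : i + 1 < n) : Perm (Fin n) :=
  Equiv.swap ⟨i, by omega⟩ ⟨i + 1, h⟩

end
/- Young subgroups, minimal coset representatives, the induced sign character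
`ε_q^λ`, and column-strict tableaux (encoded by column assignments). -/

noncomputable section
open Equiv Finset
open scoped Classical

/-- Given a composition `lam = (λ_1, …, λ_r)` of `n`, the index of the block
`B_k = [λ_1 + ⋯ + λ_{k-1} + 1, λ_1 + ⋯ + λ_k]` containing the (0-indexed)
position `i`. -/
def blockIdx (lam : List ℕ) (i : ℕ) : ℕ :=
  ((List.range lam.length).filter fun k => (lam.take (k + 1)).sum ≤ i).length

/-- Membership in the Young subgroup `S_λ`: the permutations preserving each
block `B_k`. -/
def inYoung {n : ℕ} (lam : List ℕ) (w : Perm (Fin n)) : Prop :=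
  ∀ i : Fin n, blockIdx lam ((w i : Fin n) : ℕ) = blockIdx lam (i : ℕ)

/-- `u` is the minimum-length representative of its coset `S_λ u`
(in the paper's conventions, of the left coset `u S_λ` used in the
factorization `w = w_- w^*`): `u` has no inversions whose two values lie in a
common block. -/
def isMinRep {n : ℕ} (lam : List ℕ) (u : Perm (Fin n)) : Prop :=
  ∀ i j : Fin n, i < j →
    blockIdx lam ((u i : Fin n) : ℕ) = blockIdx lam ((u j : Fin n) : ℕ) →
      u i < u j

/-- The induced sign character `ε_q^λ = sgn ↑_{H_λ(q)}^{H_n(q)}`, computed in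
the natural basis: `H_n(q)` is a free right `H_λ(q)`-module with basis
`{T_u}` indexed by the minimum-length coset representatives, every basis
element factors as `T_{τ∘u} = T_u T_τ` with `τ ∈ S_λ`, the sign character
sends `T_τ` to `(-1)^{ℓ(τ)}`, and the character of the induced module
`H_n(q) ⊗_{H_λ(q)} sgn` is obtained by summing the diagonal coefficients. -/
def epsChar {n : ℕ} {H : Type*} [Ring H] [Algebra R2 H] (lam : List ℕ)
    (T : Module.Basis (Perm (Fin n)) R2 H) (h : H) : R2 :=
  ∑ u ∈ (univ : Finset (Perm (Fin n))).filter (fun u => isMinRep lam u),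
    ∑ τ ∈ (univ : Finset (Perm (Fin n))).filter (fun τ => inYoung lam τ),
      (-1 : R2) ^ len τ * T.repr (h * T u) (τ * u)

/-- A column-strict tableau of shape `λᵗ` (whose columns therefore have
lengths `λ_1, …, λ_r`) filled with the paths of a covering path family of
type `typeOf vs`, encoded by the assignment `f` sending each path to the
index of its column: column `k` must have `λ_k` entries, and since the
entries of a column are arranged bottom-to-top in increasing order of source
index, column-strictness says that the sink indices of the paths in a common
column also increase with the source indices. -/
def IsColStrictAssign {n m : ℕ} (lam : List ℕ) (vs : Fin m → Perm (Fin n))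
    (f : Fin n → Fin lam.length) : Prop :=
  (∀ k : Fin lam.length,
      ((univ : Finset (Fin n)).filter fun i => f i = k).card = lam.get k) ∧
    ∀ i j : Fin n, f i = f j → i < j → typeOf vs i < typeOf vs j

end
/- The data of the involution ζ on the tableau set T_I.  An ordered set
partition `I = (I_1, …, I_r)` of `[n]` of type `λ` is encoded by the
permutation `u = u(I)` (increasing on each block `B_k`, with `I_k = u(B_k)`);
an element `U(π, u, yu)` of `U_I(G)` is encoded by the covering path family
`π` (with `typeOf π = u ∘ y ∘ u⁻¹` for some `y ∈ S_λ`); its image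
`W = δ(U(π,u,yu)) ∈ T_I(G)` is the tableau of shape `λᵗ` whose `k`-th column
contains the paths with sources in `I_k`, so the column of the path `i` in
`W` is `colOf lam u i`. -/

noncomputable section
open Equiv Finset
open scoped Classical

/-- The column of the path `π_i` in the tableau `δ(U(π,u,yu)) ∈ T_I`. -/
def colOf {n : ℕ} (lam : List ℕ) (u : Perm (Fin n)) (i : Fin n) : ℕ :=
  blockIdx lam ((u⁻¹ i : Fin n) : ℕ)

/-- Column `c` of the tableau `δ(U(π,u,yu))` is column-strict: its sink
indices increase (bottom to top) together with its source indices. -/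
def colStrictCol {n m : ℕ} (lam : List ℕ) (u : Perm (Fin n))
    (vs : Fin m → Perm (Fin n)) (c : ℕ) : Prop :=
  ∀ i i' : Fin n, colOf lam u i = c → colOf lam u i' = c → i < i' →
    typeOf vs i < typeOf vs i'

/-- The path family obtained by swapping the terminal subpaths of the paths
from sources `i` and `i'`, beginning at the central vertex of the factor
`G_{J_p}`: the permutation realized at factor `p` is composed with the
transposition of the two leaving positions. -/
def zetaSwap {n m : ℕ} (vs : Fin m → Perm (Fin n)) (p : Fin m)
    (i i' : Fin n) : Fin m → Perm (Fin n) :=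
  fun k => if k = p then
    Equiv.swap (posAt vs (p.1 + 1) i) (posAt vs (p.1 + 1) i') * vs p
  else vs k

/-- The data entering the definition of the involution `ζ = ζ_I` at a
non-column-strict tableau `W = δ(U(π,u,yu)) ∈ T_I(G)`:
`tc` is the greatest index of a non-column-strict column of `W`; `p` is the
greatest index such that at least two paths of column `tc` pass through the
interior vertex of `G_{J_p}`; and `j, j'` are the two positions in block `tc`
whose paths `π_{u_j}, π_{u_{j'}}` (through that vertex) have the
right-to-left lexicographically greatest pair of sink indices, normalized so
that the sink of `π_{u_{j'}}` is the larger.  Then `ζ(W)` is obtained from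
`W` by replacing `π` with `zetaSwap vs p (u j) (u j')`. -/
structure ZetaData {n m : ℕ} (Js : Fin m → Fin n × Fin n) (lam : List ℕ)
    (u : Perm (Fin n)) (vs : Fin m → Perm (Fin n)) : Type where
  tc : ℕ
  p : Fin m
  j : Fin n
  j' : Fin n
  htc : ¬ colStrictCol lam u vs tc
  htcMax : ∀ c : ℕ, tc < c → colStrictCol lam u vs c
  hpMeet : ∃ i i' : Fin n, i ≠ i' ∧ colOf lam u i = tc ∧ colOf lam u i' = tc ∧
    centeredAt Js vs p i ∧ centeredAt Js vs p i'
  hpMax : ∀ p' : Fin m, p < p' →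
    ¬ ∃ i i' : Fin n, i ≠ i' ∧ colOf lam u i = tc ∧ colOf lam u i' = tc ∧
      centeredAt Js vs p' i ∧ centeredAt Js vs p' i'
  hne : j ≠ j'
  hjcol : blockIdx lam (j : ℕ) = tc
  hjcol' : blockIdx lam (j' : ℕ) = tc
  hjcent : centeredAt Js vs p (u j)
  hjcent' : centeredAt Js vs p (u j')
  hord : typeOf vs (u j) < typeOf vs (u j')
  hmax : ∀ k k' : Fin n, k ≠ k' →
    blockIdx lam (k : ℕ) = tc → blockIdx lam (k' : ℕ) = tc →
    centeredAt Js vs p (u k) → centeredAt Js vs p (u k') →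
    typeOf vs (u k) < typeOf vs (u k') →
    (typeOf vs (u k') < typeOf vs (u j') ∨
      (k' = j' ∧ typeOf vs (u k) ≤ typeOf vs (u j)))

/-- The number `b` of paths of `π` which enter the factor `G_{J_p}` between
the paths from sources `i` and `i'`, and which also leave `G_{J_p}` between
the same two paths. -/
def betweenNum {n m : ℕ} (Js : Fin m → Fin n × Fin n) (vs : Fin m → Perm (Fin n))
    (p : Fin m) (i i' : Fin n) : ℕ :=
  ((univ : Finset (Fin n)).filter fun x =>
    x ≠ i ∧ x ≠ i' ∧ centeredAt Js vs p x ∧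
      (min (posAt vs p i) (posAt vs p i') < posAt vs p x ∧
        posAt vs p x < max (posAt vs p i) (posAt vs p i')) ∧
      (min (posAt vs (p.1 + 1) i) (posAt vs (p.1 + 1) i') < posAt vs (p.1 + 1) x ∧
        posAt vs (p.1 + 1) x < max (posAt vs (p.1 + 1) i) (posAt vs (p.1 + 1) i'))).card

end
noncomputable section
open Equiv Finset
open scoped Classical

/-! ### Auxiliary lemmas -/

section Aux

variable {n m : ℕ}

lemma posAt_zero (vs : Fin m → Perm (Fin n)) : posAt vs 0 = 1 := by
  simp [posAt]

lemma posAt_succ (vs : Fin m → Perm (Fin n)) {k : ℕ} (hk : k < m) :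
    posAt vs (k + 1) = vs ⟨k, hk⟩ * posAt vs k := by
  simp [posAt, List.take_succ, List.getElem?_ofFn, hk]

lemma inSJ_apply_ne {J : Fin n × Fin n} {w : Perm (Fin n)} (_ : inSJ J w) {i : Fin n}
    (hi : w i ≠ i) : w (w i) ≠ w i := fun hc => hi (w.injective hc)

lemma inSJ_fix {J : Fin n × Fin n} {w : Perm (Fin n)} (h : inSJ J w) {i : Fin n}
    (hi : ¬ memJ J i) : w i = i := by
  by_contra hc; exact hi (h i hc)

lemma inSJ_mem {J : Fin n × Fin n} {w : Perm (Fin n)} (h : inSJ J w) {i : Fin n}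
    (hi : memJ J i) : memJ J (w i) := by
  by_cases hc : w i = i
  · rwa [hc]
  · exact h (w i) (inSJ_apply_ne h hc)

lemma inSJ_id {J : Fin n × Fin n} {w : Perm (Fin n)} (h : inSJ J w)
    (hJ : ¬ J.1 < J.2) : ∀ i, w i = i := by
  intro i
  by_contra hc
  obtain ⟨a1, a2⟩ := h i hc
  obtain ⟨b1, b2⟩ := h (w i) (inSJ_apply_ne h hc)
  have hJJ : J.1 = J.2 := le_antisymm (a1.trans a2) (not_lt.mp hJ)
  have hi : i = J.1 := le_antisymm (hJJ ▸ a2) a1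
  have hwi : w i = J.1 := le_antisymm (hJJ ▸ b2) b1
  exact hc (by rw [hwi, hi])

lemma step_pres {J : Fin n × Fin n} {w : Perm (Fin n)} (h : inSJ J w) {s t : Fin n}
    (hst : ¬ ((J.1 < J.2 ∧ memJ J s) ∧ (J.1 < J.2 ∧ memJ J t))) :
    (w s < w t ↔ s < t) := by
  by_cases hJ : J.1 < J.2
  · have hor : ¬ memJ J s ∨ ¬ memJ J t := by tauto
    by_cases hms : memJ J s <;> by_cases hmt : memJ J t
    · exact absurd ⟨⟨hJ, hms⟩, ⟨hJ, hmt⟩⟩ hst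
    · have c1 := inSJ_mem h hms
      rw [inSJ_fix h hmt]
      revert c1 hms hmt hJ
      simp only [memJ, not_and_or, not_le, Fin.lt_def, Fin.le_def, and_imp]
      omega
    · have c1 := inSJ_mem h hmt
      rw [inSJ_fix h hms]
      revert c1 hms hmt hJ
      simp only [memJ, not_and_or, not_le, Fin.lt_def, Fin.le_def, and_imp]
      omega
    · rw [inSJ_fix h hms, inSJ_fix h hmt]
  · rw [inSJ_id h hJ s, inSJ_id h hJ t]

lemma posAt_zetaSwap (vs : Fin m → Perm (Fin n)) (p : Fin m) (a a' : Fin n) :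
    ∀ k, k ≤ m → posAt (zetaSwap vs p a a') k =
      if k ≤ (p : ℕ) then posAt vs k else posAt vs k * Equiv.swap a a' := by
  intro k
  induction k with
  | zero => intro _; rw [if_pos (Nat.zero_le _), posAt_zero, posAt_zero]
  | succ k ih =>
    intro hk1
    have hkm : k < m := by omega
    have ihk := ih (by omega)
    rcases Nat.lt_trichotomy k (p : ℕ) with hlt | heq | hgt
    · rw [if_pos (show k + 1 ≤ (p : ℕ) from hlt)]
      rw [if_pos (Nat.le_of_lt hlt)] at ihk
      rw [posAt_succ _ hkm, posAt_succ vs hkm, ihk]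
      congr 1
      simp [zetaSwap, Fin.ext_iff, Nat.ne_of_lt hlt]
    · rw [if_neg (show ¬ (k + 1 ≤ (p : ℕ)) by omega)]
      rw [if_pos (le_of_eq heq)] at ihk
      rw [posAt_succ _ hkm, posAt_succ vs hkm, ihk]
      have hfp : (⟨k, hkm⟩ : Fin m) = p := Fin.ext heq
      rw [hfp]
      have hzp : zetaSwap vs p a a' p =
          Equiv.swap (posAt vs ((p : ℕ) + 1) a) (posAt vs ((p : ℕ) + 1) a') * vs p := by
        simp [zetaSwap]
      rw [hzp]
      have hF : posAt vs ((p : ℕ) + 1) = vs p * posAt vs (p : ℕ) := by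
        have h := posAt_succ vs p.isLt
        simpa using h
      subst heq
      rw [Equiv.swap_apply_apply, hF]
      group
    · rw [if_neg (show ¬ (k + 1 ≤ (p : ℕ)) by omega)]
      rw [if_neg (by omega)] at ihk
      rw [posAt_succ _ hkm, posAt_succ vs hkm, ihk]
      have hzk : zetaSwap vs p a a' ⟨k, hkm⟩ = vs ⟨k, hkm⟩ := by
        simp [zetaSwap, Fin.ext_iff, Nat.ne_of_gt hgt]
      rw [hzk, ← mul_assoc]

lemma posAt_zetaSwap_le (vs : Fin m → Perm (Fin n)) (p : Fin m) (a a' : Fin n)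
    {k : ℕ} (hk : k ≤ (p : ℕ)) :
    posAt (zetaSwap vs p a a') k = posAt vs k := by
  rw [posAt_zetaSwap vs p a a' k (by have := p.isLt; omega), if_pos hk]

lemma posAt_zetaSwap_gt (vs : Fin m → Perm (Fin n)) (p : Fin m) (a a' : Fin n)
    {k : ℕ} (hk : (p : ℕ) < k) (hkm : k ≤ m) :
    posAt (zetaSwap vs p a a') k = posAt vs k * Equiv.swap a a' := by
  rw [posAt_zetaSwap vs p a a' k hkm, if_neg (by omega)]

/-- After the last factor where two column-`tc` paths meet, the relative order
of two column-`tc` paths never changes. -/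
lemma order_pres {Js : Fin m → Fin n × Fin n} {vs : Fin m → Perm (Fin n)}
    (hvs : IsPathFamily Js vs) {lam : List ℕ} {u : Perm (Fin n)}
    {p : Fin m} {tc : ℕ}
    (hpMax : ∀ p' : Fin m, p < p' →
      ¬ ∃ i i' : Fin n, i ≠ i' ∧ colOf lam u i = tc ∧ colOf lam u i' = tc ∧
        centeredAt Js vs p' i ∧ centeredAt Js vs p' i')
    {x x' : Fin n} (hxx : x ≠ x') (hcx : colOf lam u x = tc)
    (hcx' : colOf lam u x' = tc) :
    ∀ k, (p : ℕ) + 1 ≤ k → k ≤ m →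
      (posAt vs k x < posAt vs k x' ↔
        posAt vs ((p : ℕ) + 1) x < posAt vs ((p : ℕ) + 1) x') := by
  intro k
  induction k with
  | zero => intro h1 _; omega
  | succ k ih =>
    intro h1 h2
    by_cases hk : (p : ℕ) + 1 ≤ k
    · have hkm : k < m := by omega
      rw [posAt_succ vs hkm, Perm.mul_apply, Perm.mul_apply]
      have hnc : ¬ (((Js ⟨k, hkm⟩).1 < (Js ⟨k, hkm⟩).2 ∧
            memJ (Js ⟨k, hkm⟩) (posAt vs k x)) ∧
          ((Js ⟨k, hkm⟩).1 < (Js ⟨k, hkm⟩).2 ∧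
            memJ (Js ⟨k, hkm⟩) (posAt vs k x'))) := by
        intro ⟨c1, c2⟩
        exact hpMax ⟨k, hkm⟩ (Fin.lt_def.mpr (by simp; omega))
          ⟨x, x', hxx, hcx, hcx', c1, c2⟩
      rw [step_pres (hvs ⟨k, hkm⟩) hnc]
      exact ih hk (by omega)
    · have : k + 1 = (p : ℕ) + 1 := by omega
      rw [this]

lemma sum_split3 {α : Type*} [Fintype α] [DecidableEq α] {a a' : α} (hane : a ≠ a')
    (g : α → ℕ) :
    ∑ y : α, g y = g a + g a' + ∑ y ∈ (univ.erase a).erase a', g y := by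
  rw [add_assoc,
    Finset.add_sum_erase _ g (Finset.mem_erase.mpr ⟨hane.symm, Finset.mem_univ a'⟩),
    Finset.add_sum_erase _ g (Finset.mem_univ a)]

lemma sum_pair_split {α : Type*} [Fintype α] [DecidableEq α] {a a' : α} (hane : a ≠ a')
    (F : α → α → ℕ) :
    ∑ pr : α × α, F pr.1 pr.2 =
      (∑ x ∈ (univ.erase a).erase a', ∑ y ∈ (univ.erase a).erase a', F x y) +
      (∑ x ∈ (univ.erase a).erase a', (F x a + F x a' + F a x + F a' x)) +
      (F a a + F a a' + F a' a + F a' a') := by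
  simp only [Fintype.sum_prod_type]
  rw [show (∑ x : α, ∑ y : α, F x y) =
      ∑ x : α, (F x a + F x a' + ∑ y ∈ (univ.erase a).erase a', F x y) from
    Finset.sum_congr rfl fun x _ => sum_split3 hane _]
  rw [sum_split3 hane]
  simp only [Finset.sum_add_distrib]
  ring

/-- The key local count at the swap factor: for a path `x` distinct from the
two swapped paths, the contribution of the pairs `{x, a}, {x, a'}` to the
number of inverted noncrossings changes by the "betweenness" indicator of
`x`, with a sign depending on whether `(π_a, π_{a'}, p)` crosses. -/
lemma side_count {Js : Fin m → Fin n × Fin n} (vs : Fin m → Perm (Fin n))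
    (lam : List ℕ) (u : Perm (Fin n)) (p : Fin m) (tc : ℕ) (a a' x : Fin n)
    (hca : colOf lam u a = tc) (hca' : colOf lam u a' = tc)
    (hcenta : centeredAt Js vs p a) (hcenta' : centeredAt Js vs p a')
    (hane : a ≠ a') (hxa : x ≠ a) (hxa' : x ≠ a')
    (hFord : posAt vs ((p : ℕ) + 1) a < posAt vs ((p : ℕ) + 1) a')
    (hnbx : colOf lam u x = tc → centeredAt Js vs p x →
      ¬ (posAt vs ((p : ℕ) + 1) a < posAt vs ((p : ℕ) + 1) x ∧
         posAt vs ((p : ℕ) + 1) x < posAt vs ((p : ℕ) + 1) a')) :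
    ((if noncrossBelow Js (zetaSwap vs p a a') p x a ∧
        colOf lam u a < colOf lam u x then 1 else 0) +
     (if noncrossBelow Js (zetaSwap vs p a a') p x a' ∧
        colOf lam u a' < colOf lam u x then 1 else 0) +
     (if noncrossBelow Js (zetaSwap vs p a a') p a x ∧
        colOf lam u x < colOf lam u a then 1 else 0) +
     (if noncrossBelow Js (zetaSwap vs p a a') p a' x ∧
        colOf lam u x < colOf lam u a' then 1 else 0)) +
    (if posAt vs (p : ℕ) a < posAt vs (p : ℕ) a' then
      (if x ≠ a ∧ x ≠ a' ∧ centeredAt Js vs p x ∧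
          (min (posAt vs p a) (posAt vs p a') < posAt vs p x ∧
            posAt vs p x < max (posAt vs p a) (posAt vs p a')) ∧
          (min (posAt vs ((p : ℕ) + 1) a) (posAt vs ((p : ℕ) + 1) a') <
              posAt vs ((p : ℕ) + 1) x ∧
            posAt vs ((p : ℕ) + 1) x <
              max (posAt vs ((p : ℕ) + 1) a) (posAt vs ((p : ℕ) + 1) a'))
        then 1 else 0)
      else 0) =
    ((if noncrossBelow Js vs p x a ∧
        colOf lam u a < colOf lam u x then 1 else 0) +
     (if noncrossBelow Js vs p x a' ∧
        colOf lam u a' < colOf lam u x then 1 else 0) +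
     (if noncrossBelow Js vs p a x ∧
        colOf lam u x < colOf lam u a then 1 else 0) +
     (if noncrossBelow Js vs p a' x ∧
        colOf lam u x < colOf lam u a' then 1 else 0)) +
    (if posAt vs (p : ℕ) a' < posAt vs (p : ℕ) a then
      (if x ≠ a ∧ x ≠ a' ∧ centeredAt Js vs p x ∧
          (min (posAt vs p a) (posAt vs p a') < posAt vs p x ∧
            posAt vs p x < max (posAt vs p a) (posAt vs p a')) ∧
          (min (posAt vs ((p : ℕ) + 1) a) (posAt vs ((p : ℕ) + 1) a') <
              posAt vs ((p : ℕ) + 1) x ∧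
            posAt vs ((p : ℕ) + 1) x <
              max (posAt vs ((p : ℕ) + 1) a) (posAt vs ((p : ℕ) + 1) a'))
        then 1 else 0)
      else 0) := by
  have hE : posAt (zetaSwap vs p a a') (p : ℕ) = posAt vs (p : ℕ) :=
    posAt_zetaSwap_le vs p a a' le_rfl
  have hF : posAt (zetaSwap vs p a a') ((p : ℕ) + 1) =
      posAt vs ((p : ℕ) + 1) * Equiv.swap a a' :=
    posAt_zetaSwap_gt vs p a a' (Nat.lt_succ_self _) p.isLt
  by_cases hcx : centeredAt Js vs p x
  · by_cases hcol : colOf lam u x = tc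
    · have hnb2 := hnbx hcol hcx
      have hbtF : ¬ (x ≠ a ∧ x ≠ a' ∧ centeredAt Js vs p x ∧
          (min (posAt vs p a) (posAt vs p a') < posAt vs p x ∧
            posAt vs p x < max (posAt vs p a) (posAt vs p a')) ∧
          (min (posAt vs ((p : ℕ) + 1) a) (posAt vs ((p : ℕ) + 1) a') <
              posAt vs ((p : ℕ) + 1) x ∧
            posAt vs ((p : ℕ) + 1) x <
              max (posAt vs ((p : ℕ) + 1) a) (posAt vs ((p : ℕ) + 1) a'))) := by
        rintro ⟨-, -, -, -, h5⟩
        rw [min_eq_left (le_of_lt hFord), max_eq_right (le_of_lt hFord)] at h5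
        exact hnb2 h5
      simp only [hca, hca', hcol, lt_self_iff_false, and_false, if_false,
        if_neg hbtF]
      simp
    · have c1 := hcenta.1
      have c2 := hcenta.2
      have c3 := hcenta'.2
      have c4 := hcx.2
      have vne : ∀ (w : Perm (Fin n)) (z z' : Fin n), z ≠ z' →
          ((w z : Fin n) : ℕ) ≠ ((w z' : Fin n) : ℕ) :=
        fun w z z' hz h => hz (w.injective (Fin.val_injective h))
      have n1 := vne (posAt vs (p : ℕ)) x a hxa
      have n2 := vne (posAt vs (p : ℕ)) x a' hxa'
      have n3 := vne (posAt vs (p : ℕ)) a a' hane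
      have n4 := vne (posAt vs ((p : ℕ) + 1)) x a hxa
      have n5 := vne (posAt vs ((p : ℕ) + 1)) x a' hxa'
      have hFv : ((posAt vs ((p : ℕ) + 1) a : Fin n) : ℕ) <
          ((posAt vs ((p : ℕ) + 1) a' : Fin n) : ℕ) := hFord
      have hcolv : colOf lam u x ≠ tc := hcol
      have hEne : posAt vs (p : ℕ) a ≠ posAt vs (p : ℕ) a' :=
        fun h => hane ((posAt vs (p : ℕ)).injective h)
      have hgen : ∀ cc : Prop, ∀ inst : Decidable cc,
          (@ite _ cc inst (0:ℕ) 0) = 0 := fun cc inst => ite_self 0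
      rcases lt_or_gt_of_ne hEne with hEo | hEo <;>
        [rw [if_pos hEo, if_neg (lt_asymm hEo)];
         rw [if_neg (lt_asymm hEo), if_pos hEo]] <;>
      · have hEov : ((posAt vs (p : ℕ) a : Fin n) : ℕ) ≠
            ((posAt vs (p : ℕ) a' : Fin n) : ℕ) := n3
        rcases Nat.lt_trichotomy tc (colOf lam u x) with hcc | hcc | hcc
        · have hno : ¬ colOf lam u x < tc := by omega
          simp only [noncrossBelow, meetAt, centeredAt, hE, hF, Perm.mul_apply,
            Equiv.swap_apply_left, Equiv.swap_apply_right,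
            Equiv.swap_apply_of_ne_of_ne hxa hxa', hca, hca', c1, c2, c3, c4,
            ne_eq, hxa, hxa', not_false_eq_true, true_and, and_true,
            hcc, hno, and_false, if_false, iff_true]
          simp only [min_lt_iff, lt_max_iff, Fin.lt_def]
          have hEov2 := Fin.lt_def.mp hEo
          split_ifs <;> omega
        · exact absurd hcc.symm hcolv
        · have hno : ¬ tc < colOf lam u x := by omega
          simp only [noncrossBelow, meetAt, centeredAt, hE, hF, Perm.mul_apply,
            Equiv.swap_apply_left, Equiv.swap_apply_right,
            Equiv.swap_apply_of_ne_of_ne hxa hxa', hca, hca', c1, c2, c3, c4,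
            ne_eq, hxa, hxa', not_false_eq_true, true_and, and_true,
            hcc, hno, and_false, if_false, iff_true]
          simp only [min_lt_iff, lt_max_iff, Fin.lt_def]
          have hEov2 := Fin.lt_def.mp hEo
          split_ifs <;> omega
  · have hcx' : ¬ centeredAt Js (zetaSwap vs p a a') p x := by
      simpa [centeredAt, hE] using hcx
    simp [noncrossBelow, meetAt, hcx, hcx']

end Aux

/-- Lemma 5.3, identity (5.7) / `l:statids`,
`eq:incrossid`.  Let `W = δ(U(π,u,yu)) ∈ T_I(G)` with
`ζ(W) = δ(U(π̂,u,ŷu)) ≠ W`, where the `ζ`-move (recorded by `Z`) swaps the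
terminal subpaths of `π_{u_j}, π_{u_{j'}}` at the central vertex of
`G_{J_p}`, and let `b` be the number of paths of `π` which enter `G_{J_p}`
between `π_{u_j}` and `π_{u_{j'}}` and also leave `G_{J_p}` between these two
paths.  Then `incross(ζ(W)) = incross(W) + b` if `(π_{u_j}, π_{u_{j'}}, p)`
is a crossing, and `incross(ζ(W)) = incross(W) − b` otherwise (the columns of
both tableaux being given by `colOf lam u`). -/
theorem zeta_move_incross_change
    {n m : ℕ} (Js : Fin m → Fin n × Fin n) (hJs : ∀ p, (Js p).1 ≤ (Js p).2)
    (lam : List ℕ) (hsum : lam.sum = n) (hpos : ∀ x ∈ lam, 0 < x)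
    (hsort : lam.Pairwise (fun a b => b ≤ a))
    (u : Perm (Fin n))
    (hu : ∀ i j : Fin n, i < j →
      blockIdx lam (i : ℕ) = blockIdx lam (j : ℕ) → u i < u j)
    (vs : Fin m → Perm (Fin n)) (hvs : IsPathFamily Js vs)
    (y : Perm (Fin n)) (hy : inYoung lam y)
    (hty : typeOf vs = u * y * u⁻¹)
    (Z : ZetaData Js lam u vs) :
    (crossingAt Js vs Z.p (u Z.j) (u Z.j') →
      incrossNum Js (zetaSwap vs Z.p (u Z.j) (u Z.j')) (colOf lam u) =
        incrossNum Js vs (colOf lam u) +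
          betweenNum Js vs Z.p (u Z.j) (u Z.j')) ∧
    (¬ crossingAt Js vs Z.p (u Z.j) (u Z.j') →
      incrossNum Js (zetaSwap vs Z.p (u Z.j) (u Z.j')) (colOf lam u) +
          betweenNum Js vs Z.p (u Z.j) (u Z.j') =
        incrossNum Js vs (colOf lam u)) := by
  classical
  obtain ⟨tc, p, j, j', htc, htcMax, hpMeet, hpMax, hne, hjcol, hjcol',
    hjcent, hjcent', hord, hmax⟩ := Z
  set a := u j with ha
  set a' := u j' with ha'
  have hane : a ≠ a' := fun h => hne (u.injective h)
  have hca : colOf lam u a = tc := by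
    rw [ha]; simp only [colOf, Perm.inv_def, Equiv.symm_apply_apply]; exact hjcol
  have hca' : colOf lam u a' = tc := by
    rw [ha']; simp only [colOf, Perm.inv_def, Equiv.symm_apply_apply]; exact hjcol'
  have hpm : (p : ℕ) < m := p.isLt
  have hE : posAt (zetaSwap vs p a a') (p : ℕ) = posAt vs (p : ℕ) :=
    posAt_zetaSwap_le vs p a a' le_rfl
  have hF : posAt (zetaSwap vs p a a') ((p : ℕ) + 1) =
      posAt vs ((p : ℕ) + 1) * Equiv.swap a a' :=
    posAt_zetaSwap_gt vs p a a' (Nat.lt_succ_self _) hpm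
  have hOT : ∀ z z' : Fin n, z ≠ z' → colOf lam u z = tc → colOf lam u z' = tc →
      (posAt vs ((p : ℕ) + 1) z < posAt vs ((p : ℕ) + 1) z' ↔
        typeOf vs z < typeOf vs z') := by
    intro z z' hzz hcz hcz'
    have h := order_pres hvs hpMax hzz hcz hcz' m (by omega) le_rfl
    simp only [typeOf]
    exact h.symm
  have hFord : posAt vs ((p : ℕ) + 1) a < posAt vs ((p : ℕ) + 1) a' :=
    (hOT a a' hane hca hca').mpr hord
  have hnb : ∀ x : Fin n, x ≠ a → x ≠ a' → colOf lam u x = tc →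
      centeredAt Js vs p x →
      ¬ (posAt vs ((p : ℕ) + 1) a < posAt vs ((p : ℕ) + 1) x ∧
        posAt vs ((p : ℕ) + 1) x < posAt vs ((p : ℕ) + 1) a') := by
    intro x hxa hxa' hcx hcent hlt2
    obtain ⟨h1, h2⟩ := hlt2
    have t1 : typeOf vs a < typeOf vs x := (hOT a x (Ne.symm hxa) hca hcx).mp h1
    have t2 : typeOf vs x < typeOf vs a' := (hOT x a' hxa' hcx hca').mp h2
    have hk : u⁻¹ x ≠ j' := fun h => hxa' (by rw [ha', ← h, Perm.inv_def, Equiv.apply_symm_apply])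
    have hbk : blockIdx lam ((u⁻¹ x : Fin n) : ℕ) = tc := hcx
    have hcent' : centeredAt Js vs p (u (u⁻¹ x)) := by
      rwa [Perm.inv_def, Equiv.apply_symm_apply]
    have ht2' : typeOf vs (u (u⁻¹ x)) < typeOf vs (u j') := by
      rwa [Perm.inv_def, Equiv.apply_symm_apply]
    have happ := hmax (u⁻¹ x) j' hk hbk hjcol' hcent' hjcent' ht2'
    rcases happ with h | ⟨-, hle⟩
    · exact absurd h (lt_irrefl _)
    · rw [Perm.inv_def, Equiv.apply_symm_apply] at hle
      exact absurd t1 (not_lt.mpr hle)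
  have hcolτ : ∀ i : Fin n, colOf lam u (Equiv.swap a a' i) = colOf lam u i := by
    intro i
    rcases eq_or_ne i a with h1 | h1
    · rw [h1, Equiv.swap_apply_left, hca', hca]
    rcases eq_or_ne i a' with h2 | h2
    · rw [h2, Equiv.swap_apply_right, hca, hca']
    · rw [Equiv.swap_apply_of_ne_of_ne h1 h2]
  have hIN : ∀ ws : Fin m → Perm (Fin n), incrossNum Js ws (colOf lam u) =
      ∑ q : Fin m, ∑ pr : Fin n × Fin n,
        (if noncrossBelow Js ws q pr.1 pr.2 ∧
          colOf lam u pr.2 < colOf lam u pr.1 then 1 else 0) := by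
    intro ws
    simp only [incrossNum, Finset.card_filter]
    rw [Fintype.sum_prod_type_right]
  have hslice : ∀ q : Fin m, q ≠ p →
      (∑ pr : Fin n × Fin n,
        (if noncrossBelow Js (zetaSwap vs p a a') q pr.1 pr.2 ∧
          colOf lam u pr.2 < colOf lam u pr.1 then 1 else 0)) =
      (∑ pr : Fin n × Fin n,
        (if noncrossBelow Js vs q pr.1 pr.2 ∧
          colOf lam u pr.2 < colOf lam u pr.1 then 1 else 0)) := by
    intro q hq
    rcases lt_or_gt_of_ne hq with hlt | hgt
    · refine Finset.sum_congr rfl fun pr _ => ?_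
      have hql : (q : ℕ) < (p : ℕ) := hlt
      have e1 : posAt (zetaSwap vs p a a') (q : ℕ) = posAt vs (q : ℕ) :=
        posAt_zetaSwap_le vs p a a' (by omega)
      have e2 : posAt (zetaSwap vs p a a') ((q : ℕ) + 1) = posAt vs ((q : ℕ) + 1) :=
        posAt_zetaSwap_le vs p a a' (by omega)
      simp only [noncrossBelow, meetAt, centeredAt, e1, e2]
      congr
    · have hqg : (p : ℕ) < (q : ℕ) := hgt
      have e1 : posAt (zetaSwap vs p a a') (q : ℕ) =
          posAt vs (q : ℕ) * Equiv.swap a a' :=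
        posAt_zetaSwap_gt vs p a a' hqg (le_of_lt q.isLt)
      have e2 : posAt (zetaSwap vs p a a') ((q : ℕ) + 1) =
          posAt vs ((q : ℕ) + 1) * Equiv.swap a a' :=
        posAt_zetaSwap_gt vs p a a' (by omega) q.isLt
      have hsw : ∀ z : Fin n, Equiv.swap a a' (Equiv.swap a a' z) = z :=
        fun z => Equiv.swap_apply_self _ _ _
      refine (Fintype.sum_equiv
        (Equiv.prodCongr (Equiv.swap a a') (Equiv.swap a a')) _ _
        fun pr => ?_).symm
      simp only [Equiv.prodCongr_apply, Prod.map, noncrossBelow, meetAt,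
        centeredAt, e1, e2, Perm.mul_apply, hsw, hcolτ]
      congr
  have hsplitIN : ∀ ws : Fin m → Perm (Fin n),
      incrossNum Js ws (colOf lam u) =
      (∑ pr : Fin n × Fin n,
        (if noncrossBelow Js ws p pr.1 pr.2 ∧
          colOf lam u pr.2 < colOf lam u pr.1 then 1 else 0)) +
      ∑ q ∈ univ.erase p, ∑ pr : Fin n × Fin n,
        (if noncrossBelow Js ws q pr.1 pr.2 ∧
          colOf lam u pr.2 < colOf lam u pr.1 then 1 else 0) := by
    intro ws
    rw [hIN ws, ← Finset.add_sum_erase _ _ (Finset.mem_univ p)]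
  have hRg : (∑ q ∈ univ.erase p, ∑ pr : Fin n × Fin n,
        (if noncrossBelow Js (zetaSwap vs p a a') q pr.1 pr.2 ∧
          colOf lam u pr.2 < colOf lam u pr.1 then 1 else 0)) =
      ∑ q ∈ univ.erase p, ∑ pr : Fin n × Fin n,
        (if noncrossBelow Js vs q pr.1 pr.2 ∧
          colOf lam u pr.2 < colOf lam u pr.1 then 1 else 0) :=
    Finset.sum_congr rfl fun q hq => hslice q (Finset.mem_erase.mp hq).1
  have hq1 := sum_pair_split hane (fun z z' =>
    (if noncrossBelow Js (zetaSwap vs p a a') p z z' ∧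
      colOf lam u z' < colOf lam u z then 1 else 0))
  have hq2 := sum_pair_split hane (fun z z' =>
    (if noncrossBelow Js vs p z z' ∧
      colOf lam u z' < colOf lam u z then 1 else 0))
  have hC : ∀ (ws : Fin m → Perm (Fin n)) (z z' : Fin n),
      colOf lam u z = tc → colOf lam u z' = tc →
      (if noncrossBelow Js ws p z z' ∧
        colOf lam u z' < colOf lam u z then 1 else 0) = 0 := by
    intro ws z z' h1 h2
    refine if_neg ?_
    rw [h1, h2]
    simp
  rw [hC _ a a hca hca, hC _ a a' hca hca', hC _ a' a hca' hca,
    hC _ a' a' hca' hca'] at hq1 hq2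
  have hD0 : (∑ x ∈ (univ.erase a).erase a', ∑ y ∈ (univ.erase a).erase a',
        (if noncrossBelow Js (zetaSwap vs p a a') p x y ∧
          colOf lam u y < colOf lam u x then 1 else 0)) =
      ∑ x ∈ (univ.erase a).erase a', ∑ y ∈ (univ.erase a).erase a',
        (if noncrossBelow Js vs p x y ∧
          colOf lam u y < colOf lam u x then 1 else 0) := by
    refine Finset.sum_congr rfl fun x hx => Finset.sum_congr rfl fun y hy => ?_
    simp only [Finset.mem_erase] at hx hy
    have t1 : Equiv.swap a a' x = x := Equiv.swap_apply_of_ne_of_ne hx.2.1 hx.1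
    have t2 : Equiv.swap a a' y = y := Equiv.swap_apply_of_ne_of_ne hy.2.1 hy.1
    simp only [noncrossBelow, meetAt, centeredAt, hE, hF, Perm.mul_apply, t1, t2]
    congr
  have hbtw : betweenNum Js vs p a a' = ∑ x ∈ (univ.erase a).erase a',
      (if x ≠ a ∧ x ≠ a' ∧ centeredAt Js vs p x ∧
          (min (posAt vs p a) (posAt vs p a') < posAt vs p x ∧
            posAt vs p x < max (posAt vs p a) (posAt vs p a')) ∧
          (min (posAt vs ((p : ℕ) + 1) a) (posAt vs ((p : ℕ) + 1) a') <
              posAt vs ((p : ℕ) + 1) x ∧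
            posAt vs ((p : ℕ) + 1) x <
              max (posAt vs ((p : ℕ) + 1) a) (posAt vs ((p : ℕ) + 1) a'))
        then 1 else 0) := by
    simp only [betweenNum, Finset.card_filter]
    rw [sum_split3 hane]
    simp
  have hsideEq : ∀ x, x ≠ a → x ≠ a' →
      ((if noncrossBelow Js (zetaSwap vs p a a') p x a ∧
          colOf lam u a < colOf lam u x then 1 else 0) +
       (if noncrossBelow Js (zetaSwap vs p a a') p x a' ∧
          colOf lam u a' < colOf lam u x then 1 else 0) +
       (if noncrossBelow Js (zetaSwap vs p a a') p a x ∧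
          colOf lam u x < colOf lam u a then 1 else 0) +
       (if noncrossBelow Js (zetaSwap vs p a a') p a' x ∧
          colOf lam u x < colOf lam u a' then 1 else 0)) +
      (if posAt vs (p : ℕ) a < posAt vs (p : ℕ) a' then
        (if x ≠ a ∧ x ≠ a' ∧ centeredAt Js vs p x ∧
            (min (posAt vs p a) (posAt vs p a') < posAt vs p x ∧
              posAt vs p x < max (posAt vs p a) (posAt vs p a')) ∧
            (min (posAt vs ((p : ℕ) + 1) a) (posAt vs ((p : ℕ) + 1) a') <
                posAt vs ((p : ℕ) + 1) x ∧
              posAt vs ((p : ℕ) + 1) x <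
                max (posAt vs ((p : ℕ) + 1) a) (posAt vs ((p : ℕ) + 1) a'))
          then 1 else 0)
        else 0) =
      ((if noncrossBelow Js vs p x a ∧
          colOf lam u a < colOf lam u x then 1 else 0) +
       (if noncrossBelow Js vs p x a' ∧
          colOf lam u a' < colOf lam u x then 1 else 0) +
       (if noncrossBelow Js vs p a x ∧
          colOf lam u x < colOf lam u a then 1 else 0) +
       (if noncrossBelow Js vs p a' x ∧
          colOf lam u x < colOf lam u a' then 1 else 0)) +
      (if posAt vs (p : ℕ) a' < posAt vs (p : ℕ) a then
        (if x ≠ a ∧ x ≠ a' ∧ centeredAt Js vs p x ∧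
            (min (posAt vs p a) (posAt vs p a') < posAt vs p x ∧
              posAt vs p x < max (posAt vs p a) (posAt vs p a')) ∧
            (min (posAt vs ((p : ℕ) + 1) a) (posAt vs ((p : ℕ) + 1) a') <
                posAt vs ((p : ℕ) + 1) x ∧
              posAt vs ((p : ℕ) + 1) x <
                max (posAt vs ((p : ℕ) + 1) a) (posAt vs ((p : ℕ) + 1) a'))
          then 1 else 0)
        else 0) := by
    intro x hxa hxa'
    exact side_count vs lam u p tc a a' x hca hca' hjcent hjcent' hane hxa hxa'
      hFord (fun hc hcent => hnb x hxa hxa' hc hcent)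
  have hEne : posAt vs (p : ℕ) a ≠ posAt vs (p : ℕ) a' :=
    fun h => hane ((posAt vs (p : ℕ)).injective h)
  constructor
  · intro hcr
    have hEgt : posAt vs (p : ℕ) a' < posAt vs (p : ℕ) a := by
      rcases lt_or_gt_of_ne hEne with h | h
      · exact absurd (iff_of_true h hFord) hcr.2
      · exact h
    have hSide : (∑ x ∈ (univ.erase a).erase a',
          ((if noncrossBelow Js (zetaSwap vs p a a') p x a ∧
              colOf lam u a < colOf lam u x then 1 else 0) +
           (if noncrossBelow Js (zetaSwap vs p a a') p x a' ∧
              colOf lam u a' < colOf lam u x then 1 else 0) +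
           (if noncrossBelow Js (zetaSwap vs p a a') p a x ∧
              colOf lam u x < colOf lam u a then 1 else 0) +
           (if noncrossBelow Js (zetaSwap vs p a a') p a' x ∧
              colOf lam u x < colOf lam u a' then 1 else 0))) =
        (∑ x ∈ (univ.erase a).erase a',
          ((if noncrossBelow Js vs p x a ∧
              colOf lam u a < colOf lam u x then 1 else 0) +
           (if noncrossBelow Js vs p x a' ∧
              colOf lam u a' < colOf lam u x then 1 else 0) +
           (if noncrossBelow Js vs p a x ∧
              colOf lam u x < colOf lam u a then 1 else 0) +
           (if noncrossBelow Js vs p a' x ∧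
              colOf lam u x < colOf lam u a' then 1 else 0))) +
        ∑ x ∈ (univ.erase a).erase a',
          (if x ≠ a ∧ x ≠ a' ∧ centeredAt Js vs p x ∧
              (min (posAt vs p a) (posAt vs p a') < posAt vs p x ∧
                posAt vs p x < max (posAt vs p a) (posAt vs p a')) ∧
              (min (posAt vs ((p : ℕ) + 1) a) (posAt vs ((p : ℕ) + 1) a') <
                  posAt vs ((p : ℕ) + 1) x ∧
                posAt vs ((p : ℕ) + 1) x <
                  max (posAt vs ((p : ℕ) + 1) a) (posAt vs ((p : ℕ) + 1) a'))
            then 1 else 0) := by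
      rw [← Finset.sum_add_distrib]
      refine Finset.sum_congr rfl fun x hx => ?_
      simp only [Finset.mem_erase] at hx
      have h := hsideEq x hx.2.1 hx.1
      rw [if_neg (lt_asymm hEgt), if_pos hEgt] at h
      omega
    rw [hsplitIN (zetaSwap vs p a a'), hsplitIN vs, hRg, hbtw]
    omega
  · intro hcr
    have hiff : (posAt vs (p : ℕ) a < posAt vs (p : ℕ) a' ↔
        posAt vs ((p : ℕ) + 1) a < posAt vs ((p : ℕ) + 1) a') :=
      not_not.mp fun hn => hcr ⟨⟨hjcent, hjcent'⟩, hn⟩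
    have hElt : posAt vs (p : ℕ) a < posAt vs (p : ℕ) a' := hiff.mpr hFord
    have hSide : (∑ x ∈ (univ.erase a).erase a',
          ((if noncrossBelow Js (zetaSwap vs p a a') p x a ∧
              colOf lam u a < colOf lam u x then 1 else 0) +
           (if noncrossBelow Js (zetaSwap vs p a a') p x a' ∧
              colOf lam u a' < colOf lam u x then 1 else 0) +
           (if noncrossBelow Js (zetaSwap vs p a a') p a x ∧
              colOf lam u x < colOf lam u a then 1 else 0) +
           (if noncrossBelow Js (zetaSwap vs p a a') p a' x ∧
              colOf lam u x < colOf lam u a' then 1 else 0))) +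
        (∑ x ∈ (univ.erase a).erase a',
          (if x ≠ a ∧ x ≠ a' ∧ centeredAt Js vs p x ∧
              (min (posAt vs p a) (posAt vs p a') < posAt vs p x ∧
                posAt vs p x < max (posAt vs p a) (posAt vs p a')) ∧
              (min (posAt vs ((p : ℕ) + 1) a) (posAt vs ((p : ℕ) + 1) a') <
                  posAt vs ((p : ℕ) + 1) x ∧
                posAt vs ((p : ℕ) + 1) x <
                  max (posAt vs ((p : ℕ) + 1) a) (posAt vs ((p : ℕ) + 1) a'))
            then 1 else 0)) =
        ∑ x ∈ (univ.erase a).erase a',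
          ((if noncrossBelow Js vs p x a ∧
              colOf lam u a < colOf lam u x then 1 else 0) +
           (if noncrossBelow Js vs p x a' ∧
              colOf lam u a' < colOf lam u x then 1 else 0) +
           (if noncrossBelow Js vs p a x ∧
              colOf lam u x < colOf lam u a then 1 else 0) +
           (if noncrossBelow Js vs p a' x ∧
              colOf lam u x < colOf lam u a' then 1 else 0)) := by
      rw [← Finset.sum_add_distrib]
      refine Finset.sum_congr rfl fun x hx => ?_
      simp only [Finset.mem_erase] at hx
      have h := hsideEq x hx.2.1 hx.1
      rw [if_pos hElt, if_neg (lt_asymm hElt)] at h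
      omega
    rw [hsplitIN (zetaSwap vs p a a'), hsplitIN vs, hRg, hbtw]
    omega

end
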